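/- Let f : 2^M → ℝ be an intersecting submodular function with f(∅) = 0 (i.e., f(S) + f(T) ≥ f(S∪T) + f(S∩T) whenever S ∩ T ≠ ∅). Then the Dilworth truncation g(S) = min over partitions P of S of ∑_{V∈P} f(V) is a submodular function satisfying g(∅) = 0 and P(g,≤) = P(f,≤). -/

import Mathlib

open Finset

/-- `P` is a partition of the finite set `S`: a collection of nonempty pairwise disjoint
subsets whose union is `S`. -/
def IsPartitionOf {ι : Type*} [DecidableEq ι] (P : Finset (Finset ι)) (S : Finset ι) : Prop :=
  (∀ V ∈ P, V.Nonempty) ∧ (∀ V ∈ P, ∀ W ∈ P, V ≠ W → Disjoint V W) ∧ P.biUnion id = S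


section
variable {ι : Type*} [DecidableEq ι]

instance (P : Finset (Finset ι)) (S : Finset ι) :
    Decidable (IsPartitionOf P S) := by unfold IsPartitionOf; infer_instance

def DTparts (S : Finset ι) : Finset (Finset (Finset ι)) :=
  S.powerset.powerset.filter (fun P => IsPartitionOf P S)

lemma DTmem_parts (S : Finset ι) (P : Finset (Finset ι)) :
    P ∈ DTparts S ↔ IsPartitionOf P S := by
  simp only [DTparts, mem_filter, mem_powerset, and_iff_right_iff_imp]
  rintro ⟨h1, h2, h3⟩ V hV
  rw [mem_powerset]
  exact h3 ▸ subset_biUnion_of_mem id hV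

lemma DTparts_nonempty (S : Finset ι) : (DTparts S).Nonempty := by
  refine ⟨S.image (fun i => {i}), (DTmem_parts S _).2 ⟨?_, ?_, ?_⟩⟩
  · simp only [mem_image]; rintro V ⟨i, _, rfl⟩; exact singleton_nonempty i
  · simp only [mem_image]
    rintro V ⟨i, _, rfl⟩ W ⟨j, _, rfl⟩ hne
    simp only [disjoint_singleton_left, mem_singleton]
    intro h; exact hne (by rw [h])
  · ext x; simp

noncomputable def DTg (f : Finset ι → ℝ) (S : Finset ι) : ℝ :=
  ((DTparts S).image (fun P => ∑ V ∈ P, f V)).min'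
    ((DTparts_nonempty S).image _)

lemma DTg_isLeast (f : Finset ι → ℝ) (S : Finset ι) :
    IsLeast {x : ℝ | ∃ P : Finset (Finset ι), IsPartitionOf P S ∧ x = ∑ V ∈ P, f V}
      (DTg f S) := by
  constructor
  · have := Finset.min'_mem ((DTparts S).image (fun P => ∑ V ∈ P, f V))
      ((DTparts_nonempty S).image _)
    rw [mem_image] at this
    obtain ⟨P, hP, hPs⟩ := this
    exact ⟨P, (DTmem_parts S P).1 hP, hPs.symm⟩
  · rintro x ⟨P, hP, rfl⟩
    exact Finset.min'_le _ _ (mem_image_of_mem _ ((DTmem_parts S P).2 hP))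

lemma DTg_le (f : Finset ι → ℝ) {S : Finset ι} {P : Finset (Finset ι)}
    (hP : IsPartitionOf P S) : DTg f S ≤ ∑ V ∈ P, f V :=
  (DTg_isLeast f S).2 ⟨P, hP, rfl⟩

lemma DTg_exists (f : Finset ι → ℝ) (S : Finset ι) :
    ∃ P, IsPartitionOf P S ∧ DTg f S = ∑ V ∈ P, f V :=
  (DTg_isLeast f S).1

lemma DTg_empty (f : Finset ι → ℝ) : DTg f ∅ = 0 := by
  obtain ⟨P, ⟨h1, _, h3⟩, hval⟩ := DTg_exists f (∅ : Finset ι)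
  have : P = ∅ := by
    rw [eq_empty_iff_forall_notMem]
    intro V hV
    have hne := h1 V hV
    have : V ⊆ ∅ := h3 ▸ subset_biUnion_of_mem id hV
    simp [Finset.subset_empty.1 this] at hne
  simp [hval, this]

end

section
variable {ι : Type*} [DecidableEq ι]

def DTcov (F : Multiset (Finset ι)) (x : ι) : ℕ := (F.filter (fun V => x ∈ V)).card

lemma DTcov_cons (V : Finset ι) (F : Multiset (Finset ι)) (x : ι) :
    DTcov (V ::ₘ F) x = (if x ∈ V then 1 else 0) + DTcov F x := by
  simp only [DTcov, Multiset.filter_cons, Multiset.card_add]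
  split <;> simp

lemma DTcov_add (F G : Multiset (Finset ι)) (x : ι) :
    DTcov (F + G) x = DTcov F x + DTcov G x := by
  simp [DTcov, Multiset.filter_add]

lemma DTcov_ge (F : Multiset (Finset ι)) (x : ι) (m : Multiset (Finset ι))
    (hle : ∀ a, m.count a ≤ F.count a) (hx : ∀ V ∈ m, x ∈ V) :
    m.card ≤ DTcov F x := by
  refine Multiset.card_le_card (Multiset.le_filter.2 ⟨Multiset.le_iff_count.2 hle, hx⟩)

lemma DTcov_pos_iff (F : Multiset (Finset ι)) (x : ι) :
    1 ≤ DTcov F x ↔ ∃ V ∈ F, x ∈ V := by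
  rw [DTcov, Nat.one_le_iff_ne_zero, ← Nat.pos_iff_ne_zero, Multiset.card_pos_iff_exists_mem]
  simp [Multiset.mem_filter]

lemma DTcount_le_cov (F : Multiset (Finset ι)) {V : Finset ι} {x : ι} (hx : x ∈ V) :
    F.count V ≤ DTcov F x := by
  have := DTcov_ge F x (Multiset.replicate (F.count V) V)
    (by intro a
        by_cases h : V = a
        · subst h; simp [Multiset.count_replicate]
        · simp [Multiset.count_replicate, h])
    (by intro W hW; rw [Multiset.eq_of_mem_replicate hW]; exact hx)
  simpa using this

lemma DTcov_ge_two (F : Multiset (Finset ι)) {V W : Finset ι} {x : ι}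
    (hV : V ∈ F) (hW : W ∈ F) (hne : V ≠ W) (hxV : x ∈ V) (hxW : x ∈ W) :
    2 ≤ DTcov F x := by
  have := DTcov_ge F x (V ::ₘ {W})
    (by
      intro a
      have h1 := Multiset.one_le_count_iff_mem.2 hV
      have h2 := Multiset.one_le_count_iff_mem.2 hW
      by_cases ha : a = V <;> by_cases hb : a = W <;>
        simp_all [Multiset.count_cons, Multiset.count_singleton] <;> omega)
    (by intro U hU; rcases Multiset.mem_cons.1 hU with h | h <;>
          simp_all [Multiset.mem_singleton])
  simpa using this

lemma DTcov_ge_three (F : Multiset (Finset ι)) {V W U : Finset ι} {x : ι}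
    (hV : V ∈ F) (hW : W ∈ F) (hU : U ∈ F)
    (h1 : V ≠ W) (h2 : V ≠ U) (h3 : W ≠ U)
    (hxV : x ∈ V) (hxW : x ∈ W) (hxU : x ∈ U) :
    3 ≤ DTcov F x := by
  have := DTcov_ge F x (V ::ₘ W ::ₘ {U})
    (by
      intro a
      have g1 := Multiset.one_le_count_iff_mem.2 hV
      have g2 := Multiset.one_le_count_iff_mem.2 hW
      have g3 := Multiset.one_le_count_iff_mem.2 hU
      by_cases ha : a = V <;> by_cases hb : a = W <;> by_cases hc : a = U <;>
        simp_all [Multiset.count_cons, Multiset.count_singleton] <;> omega)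
    (by intro X hX
        rcases Multiset.mem_cons.1 hX with h | h
        · simp_all
        rcases Multiset.mem_cons.1 h with h | h <;> simp_all [Multiset.mem_singleton])
  simpa using this

lemma DTcov_ge_two_one (F : Multiset (Finset ι)) {V W : Finset ι} {x : ι}
    (hV : 2 ≤ F.count V) (hW : W ∈ F) (hne : V ≠ W) (hxV : x ∈ V) (hxW : x ∈ W) :
    3 ≤ DTcov F x := by
  have := DTcov_ge F x (V ::ₘ V ::ₘ {W})
    (by
      intro a
      have g2 := Multiset.one_le_count_iff_mem.2 hW
      by_cases ha : a = V <;> by_cases hb : a = W <;>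
        simp_all [Multiset.count_cons, Multiset.count_singleton] <;> omega)
    (by intro X hX
        rcases Multiset.mem_cons.1 hX with h | h
        · simp_all
        rcases Multiset.mem_cons.1 h with h | h <;> simp_all [Multiset.mem_singleton])
  simpa using this

lemma DTtwo_mem {α : Type*} [DecidableEq α] (s : Multiset α) (h : 2 ≤ Multiset.card s) :
    (∃ a ∈ s, ∃ b ∈ s, a ≠ b) ∨ ∃ a, 2 ≤ s.count a := by
  obtain ⟨a, ha⟩ := Multiset.card_pos_iff_exists_mem.1 (show 0 < Multiset.card s by omega)
  have hcard : 0 < Multiset.card (s.erase a) := by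
    rw [Multiset.card_erase_of_mem ha]
    exact Nat.lt_pred_iff.2 (by omega)
  obtain ⟨b, hb⟩ := Multiset.card_pos_iff_exists_mem.1 hcard
  by_cases hab : a = b
  · right
    refine ⟨a, ?_⟩
    have h1 := Multiset.count_erase_self a s
    subst hab
    have hb' := Multiset.one_le_count_iff_mem.2 hb
    omega
  · left; exact ⟨a, ha, b, Multiset.mem_of_mem_erase hb, hab⟩

end
lemma DTlaminar {ι : Type*} [Fintype ι] [DecidableEq ι] (f : Finset ι → ℝ)
    (F : Multiset (Finset ι)) (hne : ∀ V ∈ F, V.Nonempty)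
    (hcov : ∀ x, DTcov F x ≤ 2)
    (hlam : ∀ V ∈ F, ∀ W ∈ F, (V ∩ W).Nonempty → V ⊆ W ∨ W ⊆ V) :
    DTg f (univ.filter fun x => 1 ≤ DTcov F x) + DTg f (univ.filter fun x => 2 ≤ DTcov F x)
      ≤ (F.map f).sum := by
  classical
  set G := F.toFinset with hG
  set P := G.filter (fun V => ∀ W ∈ G, ¬ V ⊂ W) with hPdef
  have hPF : ∀ V ∈ P, V ∈ F := fun V hV => Multiset.mem_toFinset.1 (mem_filter.1 hV).1
  have hmax : ∀ V ∈ G, ∃ W ∈ P, V ⊆ W := by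
    intro V hV
    obtain ⟨W, hWmem, hWmax⟩ := (G.filter (fun W => V ⊆ W)).exists_max_image Finset.card
      ⟨V, by simp [hV]⟩
    rw [mem_filter] at hWmem
    refine ⟨W, ?_, hWmem.2⟩
    rw [hPdef, mem_filter]
    refine ⟨hWmem.1, fun U hU hsub => ?_⟩
    have hUmem : U ∈ G.filter (fun W => V ⊆ W) := by
      rw [mem_filter]; exact ⟨hU, hWmem.2.trans hsub.subset⟩
    exact absurd (hWmax U hUmem) (not_le.2 (card_lt_card hsub))
  have hcnt2 : ∀ V ∈ F, F.count V ≤ 2 := by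
    intro V hV
    obtain ⟨x, hx⟩ := hne V hV
    exact le_trans (DTcount_le_cov F hx) (hcov x)
  have hPle : P.val ≤ F := Multiset.le_iff_count.2 (fun a => by
    by_cases h : a ∈ P
    · have h1 : a ∈ F := hPF a h
      have h2 := Multiset.one_le_count_iff_mem.2 h1
      have hnd : P.val.count a ≤ 1 := Multiset.nodup_iff_count_le_one.1 P.nodup a
      omega
    · rw [Multiset.count_eq_zero_of_notMem (by simpa using h)]; omega)
  set Q := F - P.val with hQdef
  have hFPQ : P.val + Q = F := add_tsub_cancel_of_le hPle
  have hQcount : ∀ a, Q.count a = F.count a - P.val.count a := fun a => by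
    rw [hQdef, Multiset.count_sub]
  have hQF : ∀ V ∈ Q, V ∈ F := fun V h => Multiset.mem_of_le tsub_le_self h
  have hPv1 : ∀ a ∈ P, P.val.count a = 1 := fun a ha => by
    have hnd : P.val.count a ≤ 1 := Multiset.nodup_iff_count_le_one.1 P.nodup a
    have := Multiset.one_le_count_iff_mem.2 (Finset.mem_def.1 ha)
    omega
  have hPv0 : ∀ a ∉ P, P.val.count a = 0 := fun a ha =>
    Multiset.count_eq_zero_of_notMem (by simpa using ha)
  have htwoP : ∀ V, 2 ≤ F.count V → V ∈ P := by
    intro V h2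
    have hVF : V ∈ F := Multiset.one_le_count_iff_mem.1 (by omega)
    rw [hPdef, mem_filter]
    refine ⟨Multiset.mem_toFinset.2 hVF, fun W hW hss => ?_⟩
    obtain ⟨x, hx⟩ := hne V hVF
    have h3 := DTcov_ge_two_one F h2 (Multiset.mem_toFinset.1 hW) hss.ne hx (hss.subset hx)
    have := hcov x; omega
  have hnonmax : ∀ V ∈ F, V ∉ P → ∃ W ∈ F, V ⊂ W := by
    intro V hV hVP
    rw [hPdef, mem_filter, not_and] at hVP
    have := hVP (Multiset.mem_toFinset.2 hV)
    push_neg at this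
    obtain ⟨W, hW, hss⟩ := this
    exact ⟨W, Multiset.mem_toFinset.1 hW, hss⟩
  have hQnotP : ∀ V ∈ Q, F.count V ≤ 1 → V ∉ P := by
    intro V hV h1 hVP
    have := Multiset.one_le_count_iff_mem.2 hV
    have := hQcount V
    have := hPv1 V hVP
    omega
  have hQnodup : Q.Nodup := by
    rw [Multiset.nodup_iff_count_le_one]
    intro a
    rw [hQcount a]
    by_cases h : 2 ≤ F.count a
    · have ha := htwoP a h
      have := hPv1 a ha
      have : F.count a ≤ 2 := hcnt2 a (Multiset.one_le_count_iff_mem.1 (by omega))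
      omega
    · omega
  -- P is a partition of A
  have hPpart : IsPartitionOf P (univ.filter fun x => 1 ≤ DTcov F x) := by
    refine ⟨fun V hV => hne V (hPF V hV), ?_, ?_⟩
    · intro V hV W hW hVW
      rw [Finset.disjoint_left]
      intro x hxV hxW
      have hVm := (mem_filter.1 hV).2
      have hWm := (mem_filter.1 hW).2
      rcases hlam V (hPF V hV) W (hPF W hW) ⟨x, mem_inter.2 ⟨hxV, hxW⟩⟩ with h | h
      · exact hVm W (mem_filter.1 hW).1 (ssubset_of_subset_of_ne h hVW)
      · exact hWm V (mem_filter.1 hV).1 (ssubset_of_subset_of_ne h hVW.symm)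
    · ext x
      simp only [mem_biUnion, id_eq, mem_filter, mem_univ, true_and, DTcov_pos_iff]
      constructor
      · rintro ⟨V, hV, hxV⟩; exact ⟨V, hPF V hV, hxV⟩
      · rintro ⟨V, hV, hxV⟩
        obtain ⟨W, hW, hVW⟩ := hmax V (Multiset.mem_toFinset.2 hV)
        exact ⟨W, hW, hVW hxV⟩
  -- Q has no strictly nested pair
  have hQss : ∀ V ∈ Q, ∀ W ∈ Q, ¬ V ⊂ W := by
    intro V hVQ W hWQ hss
    obtain ⟨x, hx⟩ := hne V (hQF V hVQ)
    have hxW := hss.subset hx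
    have hcx := hcov x
    by_cases h2 : 2 ≤ F.count V
    · have := DTcov_ge_two_one F h2 (hQF W hWQ) hss.ne hx hxW; omega
    · have hVP : V ∉ P := hQnotP V hVQ (by omega)
      obtain ⟨U, hUF, hVU⟩ := hnonmax V (hQF V hVQ) hVP
      by_cases hUW : U = W
      · by_cases h2' : 2 ≤ F.count W
        · have := DTcov_ge_two_one F h2' (hQF V hVQ) hss.ne.symm hxW hx; omega
        · have hWP : W ∉ P := hQnotP W hWQ (by omega)
          obtain ⟨U', hU'F, hWU'⟩ := hnonmax W (hQF W hWQ) hWP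
          have := DTcov_ge_three F (hQF V hVQ) (hQF W hWQ) hU'F hss.ne
            (hss.trans hWU').ne hWU'.ne hx hxW (hWU'.subset hxW)
          omega
      · have := DTcov_ge_three F (hQF V hVQ) (hQF W hWQ) hUF hss.ne hVU.ne
          (fun h => hUW h.symm) hx hxW (hVU.subset hx)
        omega
  -- Q is a partition of B
  have hQpart : IsPartitionOf Q.toFinset (univ.filter fun x => 2 ≤ DTcov F x) := by
    refine ⟨fun V hV => hne V (hQF V (Multiset.mem_toFinset.1 hV)), ?_, ?_⟩
    · intro V hV W hW hVW
      rw [Finset.disjoint_left]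
      intro x hxV hxW
      have hVQ := Multiset.mem_toFinset.1 hV
      have hWQ := Multiset.mem_toFinset.1 hW
      rcases hlam V (hQF V hVQ) W (hQF W hWQ) ⟨x, mem_inter.2 ⟨hxV, hxW⟩⟩ with h | h
      · exact hQss V hVQ W hWQ (ssubset_of_subset_of_ne h hVW)
      · exact hQss W hWQ V hVQ (ssubset_of_subset_of_ne h hVW.symm)
    · ext x
      simp only [mem_biUnion, id_eq, mem_filter, mem_univ, true_and]
      constructor
      · rintro ⟨V, hV, hxV⟩
        have hVQ := Multiset.mem_toFinset.1 hV
        by_cases h2 : 2 ≤ F.count V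
        · exact le_trans h2 (DTcount_le_cov F hxV)
        · have hVP : V ∉ P := hQnotP V hVQ (by omega)
          obtain ⟨U, hUF, hVU⟩ := hnonmax V (hQF V hVQ) hVP
          exact DTcov_ge_two F (hQF V hVQ) hUF hVU.ne hxV (hVU.subset hxV)
      · intro h2
        have hcard : 2 ≤ Multiset.card (F.filter (fun V => x ∈ V)) := h2
        rcases DTtwo_mem _ hcard with ⟨a, ha, b, hb, hab⟩ | ⟨a, ha⟩
        · rw [Multiset.mem_filter] at ha hb
          have key : ∀ c d : Finset ι, c ∈ F → d ∈ F → x ∈ c → c ⊂ d → x ∈ Q.toFinset.biUnion id := by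
            intro c d hc hd hxc hcd
            have hcP : c ∉ P := by
              intro hcP
              exact (mem_filter.1 hcP).2 d (Multiset.mem_toFinset.2 hd) hcd
            have hcQ : c ∈ Q := by
              rw [← Multiset.one_le_count_iff_mem, hQcount, hPv0 c hcP]
              have := Multiset.one_le_count_iff_mem.2 hc
              omega
            rw [mem_biUnion]
            exact ⟨c, Multiset.mem_toFinset.2 hcQ, hxc⟩
          have hmem : x ∈ Q.toFinset.biUnion id := by
            rcases hlam a ha.1 b hb.1 ⟨x, mem_inter.2 ⟨ha.2, hb.2⟩⟩ with h | h
            · exact key a b ha.1 hb.1 ha.2 (ssubset_of_subset_of_ne h hab)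
            · exact key b a hb.1 ha.1 hb.2 (ssubset_of_subset_of_ne h hab.symm)
          rw [mem_biUnion] at hmem
          simpa using hmem
        · have haF : 2 ≤ F.count a := le_trans ha (Multiset.count_le_of_le a (Multiset.filter_le _ F))
          have haP := htwoP a haF
          have haQ : a ∈ Q := by
            rw [← Multiset.one_le_count_iff_mem, hQcount, hPv1 a haP]; omega
          have hxa : x ∈ a := by
            have : a ∈ F.filter (fun V => x ∈ V) := Multiset.one_le_count_iff_mem.1 (by omega)
            exact (Multiset.mem_filter.1 this).2
          exact ⟨a, Multiset.mem_toFinset.2 haQ, hxa⟩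
  -- conclude
  have hsum : (F.map f).sum = (∑ V ∈ P, f V) + (∑ V ∈ Q.toFinset, f V) := by
    have h1 : (∑ V ∈ P, f V) = (P.val.map f).sum := rfl
    have h2 : (∑ V ∈ Q.toFinset, f V) = (Q.map f).sum := by
      have : Q.toFinset.val = Q := Multiset.dedup_eq_self.2 hQnodup
      rw [Finset.sum, this]
    rw [h1, h2, ← Multiset.sum_add, ← Multiset.map_add, hFPQ]
  rw [hsum]
  exact add_le_add (DTg_le f hPpart) (DTg_le f hQpart)
lemma DTsq {s t u c : ℤ} (huc : u + c = s + t) (hcs : c < s) (hct : c < t) :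
    s^2 + t^2 < u^2 + c^2 := by
  have hu : u = s + t - c := by linarith
  subst hu
  nlinarith [mul_pos (sub_pos.2 hcs) (sub_pos.2 hct)]

lemma DTuncross {ι : Type*} [Fintype ι] [DecidableEq ι] (f : Finset ι → ℝ)
    (hint : ∀ S T : Finset ι, (S ∩ T).Nonempty → f (S ∪ T) + f (S ∩ T) ≤ f S + f T) :
    ∀ k (F : Multiset (Finset ι)),
      (F.map (fun V => Fintype.card ι ^ 2 - V.card ^ 2)).sum < k →
      (∀ V ∈ F, V.Nonempty) → (∀ x, DTcov F x ≤ 2) →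
      DTg f (univ.filter fun x => 1 ≤ DTcov F x) + DTg f (univ.filter fun x => 2 ≤ DTcov F x)
        ≤ (F.map f).sum := by
  intro k
  induction k with
  | zero => intro F h; omega
  | succ k ih =>
    intro F hk hne hcov
    by_cases hcr : ∃ V ∈ F, ∃ W ∈ F, (V ∩ W).Nonempty ∧ ¬ V ⊆ W ∧ ¬ W ⊆ V
    · obtain ⟨V, hV, W, hW, hi, h1, h2⟩ := hcr
      have hVW : V ≠ W := fun h => h1 (h ▸ subset_rfl)
      set F₀ := (F.erase V).erase W with hF0
      have hWe : W ∈ F.erase V := (Multiset.mem_erase_of_ne (fun h => hVW h.symm)).2 hW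
      have hsplit : F = V ::ₘ W ::ₘ F₀ := by
        rw [hF0, Multiset.cons_erase hWe, Multiset.cons_erase hV]
      set F' := (V ∪ W) ::ₘ (V ∩ W) ::ₘ F₀ with hF'
      have hcov' : ∀ x, DTcov F' x = DTcov F x := by
        intro x
        rw [hsplit, hF', DTcov_cons, DTcov_cons, DTcov_cons, DTcov_cons]
        by_cases hx1 : x ∈ V <;> by_cases hx2 : x ∈ W <;>
          simp [mem_union, mem_inter, hx1, hx2]
      have hA : (univ.filter fun x => 1 ≤ DTcov F' x) = (univ.filter fun x => 1 ≤ DTcov F x) := by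
        apply filter_congr; intro x _; rw [hcov' x]
      have hB : (univ.filter fun x => 2 ≤ DTcov F' x) = (univ.filter fun x => 2 ≤ DTcov F x) := by
        apply filter_congr; intro x _; rw [hcov' x]
      -- measure decreases
      have hsub : V ∩ W ⊂ V := by
        refine ssubset_of_subset_of_ne inter_subset_left (fun h => h1 ?_)
        rw [← h]; exact inter_subset_right
      have hsub' : V ∩ W ⊂ W := by
        refine ssubset_of_subset_of_ne inter_subset_right (fun h => h2 ?_)
        rw [← h]; exact inter_subset_left
      have hsq : V.card ^ 2 + W.card ^ 2 < (V ∪ W).card ^ 2 + (V ∩ W).card ^ 2 := by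
        have h := Finset.card_union_add_card_inter V W
        have hc1 := Finset.card_lt_card hsub
        have hc2 := Finset.card_lt_card hsub'
        have := DTsq (s := (V.card : ℤ)) (t := W.card) (u := (V ∪ W).card) (c := (V ∩ W).card)
          (by exact_mod_cast h) (by exact_mod_cast hc1) (by exact_mod_cast hc2)
        exact_mod_cast this
      have hmeas : (F'.map (fun V => Fintype.card ι ^ 2 - V.card ^ 2)).sum <
          (F.map (fun V => Fintype.card ι ^ 2 - V.card ^ 2)).sum := by
        rw [hsplit, hF']
        simp only [Multiset.map_cons, Multiset.sum_cons]
        have b1 : (V ∪ W).card ^ 2 ≤ Fintype.card ι ^ 2 :=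
          Nat.pow_le_pow_left (Finset.card_le_univ _) 2
        have b2 : (V ∩ W).card ^ 2 ≤ Fintype.card ι ^ 2 :=
          Nat.pow_le_pow_left (Finset.card_le_univ _) 2
        have b3 : V.card ^ 2 ≤ Fintype.card ι ^ 2 :=
          Nat.pow_le_pow_left (Finset.card_le_univ _) 2
        have b4 : W.card ^ 2 ≤ Fintype.card ι ^ 2 :=
          Nat.pow_le_pow_left (Finset.card_le_univ _) 2
        omega
      have hne' : ∀ U ∈ F', U.Nonempty := by
        intro U hU
        rw [hF'] at hU
        rcases Multiset.mem_cons.1 hU with h | h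
        · exact h ▸ (hne V hV).mono subset_union_left
        rcases Multiset.mem_cons.1 h with h | h
        · exact h ▸ hi
        · exact hne U (Multiset.mem_of_le (le_trans (Multiset.erase_le _ _) (Multiset.erase_le _ _)) h)
      have hcov2 : ∀ x, DTcov F' x ≤ 2 := fun x => (hcov' x) ▸ hcov x
      have hkey := ih F' (by omega) hne' hcov2
      rw [hA, hB] at hkey
      refine le_trans hkey ?_
      rw [hsplit, hF']
      simp only [Multiset.map_cons, Multiset.sum_cons]
      have := hint V W hi
      linarith
    · apply DTlaminar f F hne hcov
      push_neg at hcr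
      intro V hV W hW hiVW
      by_cases hsub : V ⊆ W
      · exact Or.inl hsub
      · exact Or.inr (hcr V hV W hW hiVW hsub)

lemma DTcov_part {ι : Type*} [DecidableEq ι] {P : Finset (Finset ι)} {S : Finset ι}
    (hP : IsPartitionOf P S) (x : ι) : DTcov P.val x = if x ∈ S then 1 else 0 := by
  obtain ⟨h1, h2, h3⟩ := hP
  by_cases hx : x ∈ S
  · simp only [hx, if_true]
    have hex : x ∈ P.biUnion id := h3 ▸ hx
    rw [mem_biUnion] at hex
    obtain ⟨V, hV, hxV⟩ := hex
    have hge : 1 ≤ DTcov P.val x := (DTcov_pos_iff _ x).2 ⟨V, Finset.mem_def.1 hV, hxV⟩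
    have hle : DTcov P.val x ≤ 1 := by
      by_contra h
      push_neg at h
      rcases DTtwo_mem _ (show 2 ≤ Multiset.card (P.val.filter (fun V => x ∈ V)) from h)
        with ⟨a, ha, b, hb, hab⟩ | ⟨a, ha⟩
      · rw [Multiset.mem_filter] at ha hb
        exact absurd (h2 a (Finset.mem_def.2 ha.1) b (Finset.mem_def.2 hb.1) hab)
          (fun hd => Finset.disjoint_left.1 hd ha.2 hb.2)
      · have h4 : 2 ≤ P.val.count a :=
          le_trans ha (Multiset.count_le_of_le a (Multiset.filter_le _ _))
        have := Multiset.nodup_iff_count_le_one.1 P.nodup a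
        omega
    omega
  · simp only [hx, if_false]
    rw [DTcov, Multiset.card_eq_zero, Multiset.filter_eq_nil]
    intro V hV hxV
    exact hx (h3 ▸ mem_biUnion.2 ⟨V, Finset.mem_def.2 hV, hxV⟩)

/-- Dilworth truncation: for an intersecting submodular `f` with `f ∅ = 0`,
the Dilworth truncation `g(S) = min over partitions P of S of ∑_{V ∈ P} f V` is a
submodular function with `g ∅ = 0` and `P(g,≤) = P(f,≤)`. -/
theorem dilworth_truncation {ι : Type*} [Fintype ι] [DecidableEq ι]
    (f : Finset ι → ℝ) (hf0 : f ∅ = 0)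
    (hint : ∀ S T : Finset ι, (S ∩ T).Nonempty → f (S ∪ T) + f (S ∩ T) ≤ f S + f T) :
    ∃ g : Finset ι → ℝ,
      (∀ S T : Finset ι, g (S ∪ T) + g (S ∩ T) ≤ g S + g T) ∧
      g ∅ = 0 ∧
      (∀ S : Finset ι,
        IsLeast {x : ℝ | ∃ P : Finset (Finset ι), IsPartitionOf P S ∧ x = ∑ V ∈ P, f V}
          (g S)) ∧
      {Z : ι → ℝ | ∀ S : Finset ι, S.Nonempty → ∑ i ∈ S, Z i ≤ g S}
        = {Z : ι → ℝ | ∀ S : Finset ι, S.Nonempty → ∑ i ∈ S, Z i ≤ f S} := by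
  refine ⟨DTg f, ?_, DTg_empty f, DTg_isLeast f, ?_⟩
  · intro S T
    obtain ⟨PS, hPS, hS⟩ := DTg_exists f S
    obtain ⟨PT, hPT, hT⟩ := DTg_exists f T
    set F := PS.val + PT.val with hF
    have hcovF : ∀ x, DTcov F x = (if x ∈ S then 1 else 0) + (if x ∈ T then 1 else 0) := by
      intro x; rw [hF, DTcov_add, DTcov_part hPS, DTcov_part hPT]
    have hcov2 : ∀ x, DTcov F x ≤ 2 := by
      intro x; rw [hcovF]; split <;> split <;> omega
    have hne : ∀ V ∈ F, V.Nonempty := by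
      intro V hV
      rcases Multiset.mem_add.1 hV with h | h
      exacts [hPS.1 V (Finset.mem_def.2 h), hPT.1 V (Finset.mem_def.2 h)]
    have hA : (univ.filter fun x => 1 ≤ DTcov F x) = S ∪ T := by
      ext x
      simp only [mem_filter, mem_univ, true_and, mem_union, hcovF x]
      split_ifs <;> simp_all
    have hB : (univ.filter fun x => 2 ≤ DTcov F x) = S ∩ T := by
      ext x
      simp only [mem_filter, mem_univ, true_and, mem_inter, hcovF x]
      split_ifs <;> simp_all
    have hkey := DTuncross f hint
      ((F.map (fun V => Fintype.card ι ^ 2 - V.card ^ 2)).sum + 1) F (by omega) hne hcov2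
    rw [hA, hB] at hkey
    have hsum : (F.map f).sum = DTg f S + DTg f T := by
      rw [hF, Multiset.map_add, Multiset.sum_add, hS, hT]; rfl
    linarith [hkey, hsum.le, hsum.ge]
  · ext Z
    simp only [Set.mem_setOf_eq]
    constructor
    · intro h S hSne
      refine le_trans (h S hSne) ?_
      have hP : IsPartitionOf {S} S := by
        refine ⟨by simpa using hSne, by simp, by simp⟩
      simpa using DTg_le f hP
    · intro h S hSne
      obtain ⟨P, hP, hval⟩ := DTg_exists f S
      rw [hval]
      obtain ⟨h1, h2, h3⟩ := hP
      have hsplit : ∑ i ∈ S, Z i = ∑ V ∈ P, ∑ i ∈ V, Z i := by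
        have hb := Finset.sum_biUnion (s := P) (t := id) (f := Z)
          (fun a ha b hb hab => h2 a ha b hb hab)
        rw [← h3, hb]
        rfl
      rw [hsplit]
      exact Finset.sum_le_sum (fun V hV => h V (h1 V hV))
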